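/- Let X be a nontrivial finite group with k := k(X) conjugacy classes, let H ≤ Sym({1,…,n}) be a nontrivial permutation group, and let G = X ≀ H. Let e denote the maximum of k(T) over all subgroups T of H, and let α(H) := max_{1≠h∈H} σ(h)/n. Then k(G) < k^n/|H| + 2·e·k^{α(H)·n}. -/

import Mathlib

open Equiv MulAction

/-- The number of conjugacy classes of a group. -/
noncomputable def kclass (G : Type*) [Group G] : ℕ := Nat.card (ConjClasses G)

/-- The coordinate-permuting action of `Perm ι` on `ι → X`, as automorphisms. -/
def permAut (ι X : Type*) [Group X] : Perm ι →* MulAut (ι → X) where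
  toFun e :=
    { toFun := fun f => f ∘ e.symm
      invFun := fun f => f ∘ e
      left_inv := fun f => by funext i; simp
      right_inv := fun f => by funext i; simp
      map_mul' := fun f g => rfl }
  map_one' := by ext f; rfl
  map_mul' := fun e₁ e₂ => by ext f; rfl

/-- The wreath product `X ≀ H` of a group `X` with a permutation group `H ≤ Perm ι`,
i.e. the semidirect product `X^ι ⋊ H` where `H` permutes the direct factors of `X^ι`. -/
abbrev Wreath (X : Type*) [Group X] {ι : Type*} (H : Subgroup (Perm ι)) :=
  SemidirectProduct (ι → X) H ((permAut ι X).comp H.subtype)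

/-- A group acting on `Ω` acts on the functions `Ω → S` by permuting coordinates. -/
instance funMulAction (G Ω S : Type*) [Group G] [MulAction G Ω] : MulAction G (Ω → S) where
  smul g f := fun ω => f (g⁻¹ • ω)
  one_smul f := funext fun ω => by
    show f ((1 : G)⁻¹ • ω) = f ω
    rw [inv_one, one_smul]
  mul_smul g h f := funext fun ω => by
    show f ((g * h)⁻¹ • ω) = f (h⁻¹ • g⁻¹ • ω)
    rw [mul_inv_rev, mul_smul]

/-- `σ(h)`: the number of cycles of a permutation `h` in its disjoint cycle decomposition,
with fixed points counted as cycles of length 1; equivalently, the number of orbits of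
the cyclic group generated by `h`. -/
noncomputable def cycleCount {ι : Type*} (h : Perm ι) : ℕ :=
  Nat.card (orbitRel.Quotient (Subgroup.zpowers h) ι)

/-- `n(G, α)`: the number of orbits of a group action. -/
noncomputable def orbitCount (G : Type*) [Group G] (α : Type*) [MulAction G α] : ℕ :=
  Nat.card (orbitRel.Quotient G α)

/-! ### Auxiliary material for the proof -/

set_option linter.unusedSectionVars false

section KclassAux

lemma kclass_pos (A : Type*) [Group A] [Finite A] : 0 < kclass A :=
  Nat.card_pos

lemma two_le_kclass (A : Type*) [Group A] [Finite A] [Nontrivial A] : 2 ≤ kclass A := by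
  rw [show (2:ℕ) = 1 + 1 by rfl, ← Nat.lt_iff_add_one_le, kclass,
    Finite.one_lt_card_iff_nontrivial]
  obtain ⟨x, hx⟩ := exists_ne (1 : A)
  exact ⟨ConjClasses.mk x, ConjClasses.mk 1, fun hc => hx (by
    have := ConjClasses.mk_eq_mk_iff_isConj.mp hc
    rwa [isConj_one_left] at this)⟩

lemma kclass_congr {A B : Type*} [Group A] [Group B] (e : A ≃* B) : kclass A = kclass B := by
  refine Nat.card_congr ⟨ConjClasses.map e.toMonoidHom, ConjClasses.map e.symm.toMonoidHom, ?_, ?_⟩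
  · intro c
    induction c using Quotient.inductionOn with
    | _ a => exact congrArg ConjClasses.mk (e.symm_apply_apply a)
  · intro c
    induction c using Quotient.inductionOn with
    | _ a => exact congrArg ConjClasses.mk (e.apply_symm_apply a)

lemma card_fiber_sum {A B : Type*} [Fintype A] [Fintype B] [DecidableEq B] (f : A → B) :
    Nat.card A = ∑ b : B, Nat.card {a : A // f a = b} := by
  simp_rw [Nat.card_eq_fintype_card]
  rw [← Fintype.card_sigma]
  exact Fintype.card_congr (Equiv.sigmaFiberEquiv f).symm

end KclassAux

section FixedAux

variable {n : ℕ} {H : Subgroup (Perm (Fin n))}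

lemma fixed_const {S : Type*} {h : H} {F : Fin n → S} (hF : h • F = F) {i j : Fin n}
    (hij : (Quotient.mk'' i :
      orbitRel.Quotient (Subgroup.zpowers (h : Perm (Fin n))) (Fin n)) = Quotient.mk'' j) :
    F i = F j := by
  have hrel := Quotient.exact' hij
  rw [MulAction.orbitRel_apply] at hrel
  obtain ⟨⟨p, hp⟩, hpj⟩ := hrel
  obtain ⟨z, hz⟩ := Subgroup.mem_zpowers_iff.mp hp
  have hzs : (h ^ z) • F = F := by
    have h1 : h ∈ MulAction.stabilizer H F := hF
    have h2 : Subgroup.zpowers h ≤ MulAction.stabilizer H F := Subgroup.zpowers_le.mpr h1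
    exact h2 (Subgroup.zpow_mem_zpowers h z)
  have hji : i = (h ^ z) • j := by
    rw [← hpj]
    show (⟨p, hp⟩ : Subgroup.zpowers (h : Perm (Fin n))) • j = (h ^ z) • j
    rw [Subgroup.smul_def, Subgroup.smul_def, SubgroupClass.coe_zpow]
    simp [← hz]
  have hcf := congrFun hzs ((h ^ z) • j)
  calc F i = F ((h^z) • j) := by rw [hji]
  _ = F j := by
    conv_lhs => rw [← hcf]
    show F ((h^z)⁻¹ • (h^z) • j) = F j
    rw [inv_smul_smul]

noncomputable def fixedEquiv (S : Type*) (h : H) :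
    (fixedBy (Fin n → S) h) ≃
      ((orbitRel.Quotient (Subgroup.zpowers (h : Perm (Fin n))) (Fin n)) → S) where
  toFun F q := F.1 q.out
  invFun u := ⟨fun i => u (Quotient.mk'' i), by
    show h • _ = _
    funext ω
    show u (Quotient.mk'' (h⁻¹ • ω)) = u (Quotient.mk'' ω)
    refine congrArg u (Quotient.sound' ?_)
    rw [MulAction.orbitRel_apply]
    exact ⟨⟨(h : Perm (Fin n))⁻¹, Subgroup.inv_mem _ (Subgroup.mem_zpowers _)⟩, rfl⟩⟩
  left_inv F := by
    refine Subtype.ext (funext fun i => ?_)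
    exact fixed_const F.2 (Quotient.out_eq' _)
  right_inv u := funext fun q => congrArg u (Quotient.out_eq' q)

lemma card_fixedBy_eq (S : Type*) [Finite S] (h : H) :
    Nat.card (fixedBy (Fin n → S) h) =
      Nat.card S ^ cycleCount (h : Perm (Fin n)) := by
  rw [Nat.card_congr (fixedEquiv S h), Nat.card_fun, cycleCount]

lemma cycleCount_one : cycleCount (1 : Perm (Fin n)) = n := by
  have e : orbitRel.Quotient (Subgroup.zpowers (1 : Perm (Fin n))) (Fin n) ≃ Fin n := by
    refine ⟨Quotient.lift id ?_, Quotient.mk'', ?_, ?_⟩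
    · intro a b hab
      obtain ⟨⟨p, hp⟩, hpa⟩ := MulAction.orbitRel_apply.mp hab
      obtain ⟨z, hz⟩ := Subgroup.mem_zpowers_iff.mp hp
      have hp1 : p = 1 := by rw [← hz, one_zpow]
      subst hp1
      have h2 : (⟨(1 : Perm (Fin n)), hp⟩ : Subgroup.zpowers (1 : Perm (Fin n))) • b = b := by
        rw [Subgroup.smul_def, one_smul]
      show a = b
      rw [← hpa]
      exact h2
    · intro q
      induction q using Quotient.inductionOn' with
      | _ a => rfl
    · intro a
      rfl
  rw [cycleCount, Nat.card_congr e, Nat.card_eq_fintype_card, Fintype.card_fin]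

end FixedAux

section DistAux

variable {n : ℕ} (P : Perm (Fin n))

local notation "QP" => orbitRel.Quotient (Subgroup.zpowers P) (Fin n)

lemma mk_inv_smul (i : Fin n) : (Quotient.mk'' (P⁻¹ • i) : QP) = Quotient.mk'' i :=
  Quotient.sound' (MulAction.orbitRel_apply.mpr
    ⟨⟨P⁻¹, Subgroup.inv_mem _ (Subgroup.mem_zpowers P)⟩, rfl⟩)

lemma exists_dist (i : Fin n) :
    ∃ m : ℕ, (P ^ m) • ((Quotient.mk'' i : QP).out) = i := by
  have h1 : (Quotient.mk'' ((Quotient.mk'' i : QP).out) : QP) = Quotient.mk'' i :=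
    Quotient.out_eq' _
  have h2 := Quotient.exact' h1
  rw [MulAction.orbitRel_apply] at h2
  obtain ⟨⟨p, hp⟩, hpi⟩ := h2
  obtain ⟨z, hz⟩ := Subgroup.mem_zpowers_iff.mp hp
  have hpi' : p • i = (Quotient.mk'' i : QP).out := hpi
  have horder : (0:ℤ) < (orderOf P : ℤ) := by exact_mod_cast orderOf_pos P
  refine ⟨((-z) % (orderOf P : ℤ)).toNat, ?_⟩
  have h3 : (P ^ (((-z) % (orderOf P : ℤ)).toNat) : Perm (Fin n)) = P ^ (-z : ℤ) := by
    rw [← zpow_natCast, Int.toNat_of_nonneg (Int.emod_nonneg _ (ne_of_gt horder)),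
      zpow_mod_orderOf]
  rw [h3, ← hpi', ← hz, smul_smul, ← zpow_add, neg_add_cancel, zpow_zero, one_smul]

noncomputable def pdist (i : Fin n) : ℕ := Nat.find (exists_dist P i)

lemma pdist_spec (i : Fin n) : (P ^ pdist P i) • ((Quotient.mk'' i : QP).out) = i :=
  Nat.find_spec (exists_dist P i)

lemma pdist_eq_zero_iff (i : Fin n) : pdist P i = 0 ↔ (Quotient.mk'' i : QP).out = i := by
  constructor
  · intro h
    have := pdist_spec P i
    rw [h] at this
    simpa using this
  · intro h
    exact Nat.le_zero.mp (Nat.find_le (by simpa using h))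

lemma pdist_ne_zero (i : Fin n) (hi : (Quotient.mk'' i : QP).out ≠ i) : pdist P i ≠ 0 :=
  fun h => hi ((pdist_eq_zero_iff P i).mp h)

lemma out_inv_smul (i : Fin n) :
    ((Quotient.mk'' (P⁻¹ • i) : QP).out) = ((Quotient.mk'' i : QP).out) := by
  rw [mk_inv_smul]

lemma pdist_le_pred (i : Fin n) (hi : (Quotient.mk'' i : QP).out ≠ i) :
    pdist P (P⁻¹ • i) ≤ pdist P i - 1 := by
  apply Nat.find_le
  rw [out_inv_smul]
  have hd : pdist P i - 1 + 1 = pdist P i := Nat.succ_pred_eq_of_ne_zero (pdist_ne_zero P i hi)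
  rw [eq_inv_smul_iff, ← mul_smul, ← pow_succ', hd]
  exact pdist_spec P i

lemma pdist_ge_pred (i : Fin n) :
    pdist P i ≤ pdist P (P⁻¹ • i) + 1 := by
  apply Nat.find_le
  have hsp := pdist_spec P (P⁻¹ • i)
  rw [out_inv_smul] at hsp
  rw [pow_succ', mul_smul, hsp, smul_inv_smul]

lemma pdist_pred (i : Fin n) (hi : (Quotient.mk'' i : QP).out ≠ i) :
    pdist P (P⁻¹ • i) = pdist P i - 1 := by
  have h1 := pdist_le_pred P i hi
  have h2 := pdist_ge_pred P i
  have h0 := pdist_ne_zero P i hi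
  omega

end DistAux

section WreathAux

open SemidirectProduct

variable {n : ℕ} {X : Type} [Group X] [Finite X] {H : Subgroup (Perm (Fin n))}

instance : Finite (Wreath X H) :=
  Finite.of_surjective (fun p : (Fin n → X) × H => (⟨p.1, p.2⟩ : Wreath X H))
    (fun a => ⟨(a.left, a.right), rfl⟩)

lemma wreath_conj (g f : Fin n → X) (t h : H) :
    (⟨g, t⟩ : Wreath X H) * ⟨f, h⟩ * (⟨g, t⟩ : Wreath X H)⁻¹ =
      ⟨fun i => g i * f ((t : Perm (Fin n)).symm i) *
        (g ((t : Perm (Fin n)) ((h : Perm (Fin n)).symm ((t : Perm (Fin n)).symm i))))⁻¹,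
        t * h * t⁻¹⟩ := by
  refine SemidirectProduct.ext ?_ rfl
  funext i
  rfl

lemma conj_base (g f : Fin n → X) (h : H) :
    (⟨g, 1⟩ : Wreath X H) * ⟨f, h⟩ * (⟨g, 1⟩ : Wreath X H)⁻¹ =
      ⟨fun i => g i * f i * (g ((h : Perm (Fin n)).symm i))⁻¹, h⟩ := by
  simpa [Equiv.Perm.one_symm] using wreath_conj g f 1 h

lemma conj_move (f : Fin n → X) (t h : H) :
    (⟨1, t⟩ : Wreath X H) * ⟨f, h⟩ * (⟨1, t⟩ : Wreath X H)⁻¹ =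
      ⟨fun i => f ((t : Perm (Fin n)).symm i), t * h * t⁻¹⟩ := by
  simpa using wreath_conj 1 f t h

lemma conj_baseelt (g f : Fin n → X) (t : H) :
    (⟨g, t⟩ : Wreath X H) * ⟨f, 1⟩ * (⟨g, t⟩ : Wreath X H)⁻¹ =
      ⟨fun i => g i * f ((t : Perm (Fin n)).symm i) * (g i)⁻¹, 1⟩ := by
  simpa [Equiv.Perm.one_symm] using wreath_conj g f t 1

/-- Recursion for collapsing an element along a cycle. -/
noncomputable def Wrec (P : Perm (Fin n)) (f : Fin n → X) : ℕ → Fin n → X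
  | 0, _ => 1
  | (m+1), i => Wrec P f m (P⁻¹ • i) * (f i)⁻¹

noncomputable def wfun (P : Perm (Fin n)) (f : Fin n → X) (i : Fin n) : X :=
  Wrec P f (pdist P i) i

lemma wfun_rep (P : Perm (Fin n)) (f : Fin n → X) (i : Fin n)
    (hi : ((Quotient.mk'' i : orbitRel.Quotient (Subgroup.zpowers P) (Fin n))).out = i) :
    wfun P f i = 1 := by
  rw [wfun, (pdist_eq_zero_iff P i).mpr hi]
  rfl

lemma wfun_step (P : Perm (Fin n)) (f : Fin n → X) (i : Fin n)
    (hi : ((Quotient.mk'' i : orbitRel.Quotient (Subgroup.zpowers P) (Fin n))).out ≠ i) :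
    wfun P f i = wfun P f (P⁻¹ • i) * (f i)⁻¹ := by
  have h0 := pdist_ne_zero P i hi
  rw [wfun, wfun, pdist_pred P i hi]
  conv_lhs => rw [← Nat.succ_pred_eq_of_ne_zero h0]
  rfl

/-- The "cycle product" of `f` at the orbit `q`, after collapsing. -/
noncomputable def Bfun (P : Perm (Fin n)) (f : Fin n → X) 
    (q : orbitRel.Quotient (Subgroup.zpowers P) (Fin n)) : X :=
  f q.out * (wfun P f (P⁻¹ • q.out))⁻¹

/-- The normal form associated with conjugacy-class data on each cycle. -/
noncomputable def nform (P : Perm (Fin n))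
    (φ : orbitRel.Quotient (Subgroup.zpowers P) (Fin n) → ConjClasses X) : Fin n → X :=
  fun i => if ((Quotient.mk'' i : orbitRel.Quotient (Subgroup.zpowers P) (Fin n))).out = i
    then (φ (Quotient.mk'' i)).out else 1

lemma conj_to_nform (h : H) (f : Fin n → X) :
    ∃ g : Fin n → X,
      (⟨g, 1⟩ : Wreath X H) * ⟨f, h⟩ * (⟨g, 1⟩ : Wreath X H)⁻¹ =
        ⟨nform (h : Perm (Fin n))
          (fun q => ConjClasses.mk (Bfun (h : Perm (Fin n)) f q)), h⟩ := by
  have hc : ∀ q : orbitRel.Quotient (Subgroup.zpowers (h : Perm (Fin n))) (Fin n),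
      ∃ c : X, c * Bfun (h : Perm (Fin n)) f q * c⁻¹ =
        (ConjClasses.mk (Bfun (h : Perm (Fin n)) f q)).out := fun q =>
    isConj_iff.mp (ConjClasses.mk_eq_mk_iff_isConj.mp (Quotient.out_eq' _).symm)
  choose c hcs using hc
  refine ⟨fun i => c (Quotient.mk'' i) * wfun (h : Perm (Fin n)) f i, ?_⟩
  rw [conj_base]
  refine SemidirectProduct.ext ?_ rfl
  funext i
  dsimp only
  have hsi : (h : Perm (Fin n)).symm i = (h : Perm (Fin n))⁻¹ • i := rfl
  rw [hsi, mk_inv_smul]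
  simp only [nform]
  by_cases hi : ((Quotient.mk'' i :
      orbitRel.Quotient (Subgroup.zpowers (h : Perm (Fin n))) (Fin n))).out = i
  · rw [if_pos hi, ← hcs (Quotient.mk'' i), wfun_rep _ f i hi]
    simp only [Bfun, hi]
    group
  · rw [if_neg hi, wfun_step _ f i hi]
    group

end WreathAux

section FiberAux

open SemidirectProduct

variable {n : ℕ} {X : Type} [Group X] [Finite X] {H : Subgroup (Perm (Fin n))}

lemma fiber_le (h : H) :
    Nat.card {C : ConjClasses (Wreath X H) //
        ConjClasses.map (SemidirectProduct.rightHom) C = ConjClasses.mk h} ≤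
      kclass X ^ cycleCount (h : Perm (Fin n)) := by
  have hθprop : ∀ φ : orbitRel.Quotient (Subgroup.zpowers (h : Perm (Fin n))) (Fin n) →
      ConjClasses X,
      ConjClasses.map (SemidirectProduct.rightHom)
        (ConjClasses.mk (⟨nform (h : Perm (Fin n)) φ, h⟩ : Wreath X H)) = ConjClasses.mk h :=
    fun φ => rfl
  have hsurj : Function.Surjective (fun φ :
      (orbitRel.Quotient (Subgroup.zpowers (h : Perm (Fin n))) (Fin n) → ConjClasses X) =>
      (⟨ConjClasses.mk (⟨nform (h : Perm (Fin n)) φ, h⟩ : Wreath X H), hθprop φ⟩ :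
        {C : ConjClasses (Wreath X H) //
          ConjClasses.map (SemidirectProduct.rightHom) C = ConjClasses.mk h})) := by
    rintro ⟨C, hC⟩
    have hmkA : ConjClasses.mk (Quotient.out C) = C := Quotient.out_eq' C
    have hC' : ConjClasses.mk ((Quotient.out C).right) = ConjClasses.mk h := by
      rw [← hC]
      conv_rhs => rw [← hmkA]
      rfl
    obtain ⟨t, ht⟩ := isConj_iff.mp (ConjClasses.mk_eq_mk_iff_isConj.mp hC'.symm)
    set f₁ : Fin n → X := fun i => (Quotient.out C).left ((t : Perm (Fin n)) i) with hf₁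
    have hconj : (⟨1, t⟩ : Wreath X H) * ⟨f₁, h⟩ * (⟨1, t⟩ : Wreath X H)⁻¹ = Quotient.out C := by
      rw [conj_move]
      refine SemidirectProduct.ext ?_ ht
      funext i
      show (Quotient.out C).left ((t : Perm (Fin n)) ((t : Perm (Fin n)).symm i)) =
        (Quotient.out C).left i
      rw [Equiv.apply_symm_apply]
    have hmkf₁ : ConjClasses.mk (⟨f₁, h⟩ : Wreath X H) = C := by
      rw [← hmkA, ConjClasses.mk_eq_mk_iff_isConj]
      exact isConj_iff.mpr ⟨⟨1, t⟩, hconj⟩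
    obtain ⟨g, hg⟩ := conj_to_nform h f₁
    refine ⟨fun q => ConjClasses.mk (Bfun (h : Perm (Fin n)) f₁ q), ?_⟩
    apply Subtype.ext
    show ConjClasses.mk _ = C
    rw [← hmkf₁, ConjClasses.mk_eq_mk_iff_isConj]
    exact (isConj_iff.mpr ⟨⟨g, 1⟩, hg⟩).symm
  calc Nat.card {C : ConjClasses (Wreath X H) //
      ConjClasses.map (SemidirectProduct.rightHom) C = ConjClasses.mk h}
      ≤ Nat.card (orbitRel.Quotient (Subgroup.zpowers (h : Perm (Fin n))) (Fin n) →
          ConjClasses X) := Nat.card_le_card_of_surjective _ hsurj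
    _ = kclass X ^ cycleCount (h : Perm (Fin n)) := by rw [Nat.card_fun]; rfl

lemma fiber_one_le :
    Nat.card {C : ConjClasses (Wreath X H) //
        ConjClasses.map (SemidirectProduct.rightHom) C = 1} ≤
      Nat.card (orbitRel.Quotient H (Fin n → ConjClasses X)) := by
  have key : ∀ C : ConjClasses (Wreath X H),
      ConjClasses.map (SemidirectProduct.rightHom) C = 1 → (Quotient.out C).right = 1 := by
    intro C hC
    have hmkA : ConjClasses.mk (Quotient.out C) = C := Quotient.out_eq' C
    have h1 : ConjClasses.mk ((Quotient.out C).right) = (1 : ConjClasses H) := by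
      rw [← hC]
      conv_rhs => rw [← hmkA]
      rfl
    rw [ConjClasses.one_eq_mk_one, ConjClasses.mk_eq_mk_iff_isConj] at h1
    exact isConj_one_left.mp h1  -- isConj_iff_eq fallback
  apply Nat.card_le_card_of_injective
    (fun C : {C : ConjClasses (Wreath X H) // ConjClasses.map (SemidirectProduct.rightHom) C = 1} =>
      (Quotient.mk'' (fun i => ConjClasses.mk ((Quotient.out C.1).left i)) :
        orbitRel.Quotient H (Fin n → ConjClasses X)))
  rintro ⟨C₁, h₁⟩ ⟨C₂, h₂⟩ hμ
  obtain ⟨t, ht⟩ := MulAction.orbitRel_apply.mp (Quotient.exact' hμ)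
  have hgs : ∀ i : Fin n, ∃ gi : X,
      gi * (Quotient.out C₂).left ((t : Perm (Fin n)).symm i) * gi⁻¹ =
        (Quotient.out C₁).left i := by
    intro i
    have := congrFun ht i
    exact isConj_iff.mp (ConjClasses.mk_eq_mk_iff_isConj.mp this)
  choose g hgsc using hgs
  have hconj : (⟨g, t⟩ : Wreath X H) * ⟨(Quotient.out C₂).left, 1⟩ *
      (⟨g, t⟩ : Wreath X H)⁻¹ = ⟨(Quotient.out C₁).left, 1⟩ := by
    rw [conj_baseelt]
    exact SemidirectProduct.ext (funext hgsc) rfl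
  have hout : ∀ (C : ConjClasses (Wreath X H))
      (hC : ConjClasses.map (SemidirectProduct.rightHom) C = 1),
      ConjClasses.mk (⟨(Quotient.out C).left, 1⟩ : Wreath X H) = C := by
    intro C hC
    have : (⟨(Quotient.out C).left, 1⟩ : Wreath X H) = Quotient.out C :=
      SemidirectProduct.ext rfl (key C hC).symm
    rw [this]
    exact Quotient.out_eq' C
  apply Subtype.ext
  show C₁ = C₂
  rw [← hout C₁ h₁, ← hout C₂ h₂, ConjClasses.mk_eq_mk_iff_isConj]
  exact (isConj_iff.mpr ⟨⟨g, t⟩, hconj⟩).symm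

lemma burnside_wreath [Fintype H] :
    Nat.card (orbitRel.Quotient H (Fin n → ConjClasses X)) * Nat.card H =
      ∑ h : H, kclass X ^ cycleCount ((h : Perm (Fin n))) := by
  classical
  letI : ∀ a : H, Fintype (fixedBy (Fin n → ConjClasses X) a) := fun a => Fintype.ofFinite _
  letI : Fintype (orbitRel.Quotient H (Fin n → ConjClasses X)) := Fintype.ofFinite _
  have hb := MulAction.sum_card_fixedBy_eq_card_orbits_mul_card_group H (Fin n → ConjClasses X)
  rw [Nat.card_eq_fintype_card, Nat.card_eq_fintype_card, ← hb]
  refine Finset.sum_congr rfl fun h _ => ?_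
  rw [← Nat.card_eq_fintype_card, card_fixedBy_eq]
  rfl

end FiberAux

/-- `k(X ≀ H) < k^n/|H| + 2 e k^{α(H) n}`, where `e` is the maximum of `k(T)` over the
subgroups `T ≤ H` and `α(H) = max_{1 ≠ h ∈ H} σ(h)/n`. -/
theorem statement5 (n : ℕ) (X : Type) [Group X] [Finite X] [Nontrivial X]
    (H : Subgroup (Perm (Fin n))) [Nontrivial H] (α : ℝ) (e : ℕ)
    (hα : IsGreatest
      {a : ℝ | ∃ h : H, h ≠ 1 ∧ a = (cycleCount (h : Perm (Fin n)) : ℝ) / n} α)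
    (he : IsGreatest {c : ℕ | ∃ T : Subgroup H, c = kclass T} e) :
    (kclass (Wreath X H) : ℝ) <
      (kclass X : ℝ) ^ n / (Nat.card H : ℝ) + 2 * e * (kclass X : ℝ) ^ (α * n) := by
  classical
  letI : Fintype H := Fintype.ofFinite H
  letI : Fintype (ConjClasses H) := Fintype.ofFinite _
  letI : Fintype (ConjClasses (Wreath X H)) := Fintype.ofFinite _
  set k := kclass X with hk
  have hn : 0 < n := by
    obtain ⟨h₀, hh₀⟩ := exists_ne (1 : H)
    rcases Nat.eq_zero_or_pos n with h | h
    · subst h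
      exact absurd (Subtype.ext (Subsingleton.elim _ _)) hh₀
    · exact h
  have hnR : (0:ℝ) < n := by exact_mod_cast hn
  have hH1 : 1 < Nat.card H := Finite.one_lt_card
  have hH2 : (2:ℝ) ≤ (Nat.card H : ℝ) := by exact_mod_cast hH1
  have hHR : (0:ℝ) < (Nat.card H : ℝ) := by linarith
  have hk2 : 2 ≤ k := two_le_kclass X
  have hk1R : (1:ℝ) ≤ (k:ℝ) := by exact_mod_cast (by omega : 1 ≤ k)
  have hpow_pos : (0:ℝ) < (k:ℝ) ^ (α * n) := Real.rpow_pos_of_pos (by linarith) _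
  have hσ : ∀ h : H, h ≠ 1 →
      ((k ^ cycleCount (h : Perm (Fin n)) : ℕ) : ℝ) ≤ (k:ℝ) ^ (α * n) := by
    intro h hne
    have h1 : (cycleCount (h : Perm (Fin n)) : ℝ) / n ≤ α := hα.2 ⟨h, hne, rfl⟩
    have h2 : (cycleCount (h : Perm (Fin n)) : ℝ) ≤ α * n := by
      rw [div_le_iff₀ hnR] at h1; exact h1
    calc ((k ^ cycleCount (h : Perm (Fin n)) : ℕ) : ℝ)
        = (k:ℝ) ^ (cycleCount (h : Perm (Fin n)) : ℝ) := by
          rw [Nat.cast_pow, Real.rpow_natCast]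
      _ ≤ (k:ℝ) ^ (α * n) := Real.rpow_le_rpow_of_exponent_le hk1R h2
  obtain ⟨T₀, hT₀⟩ := he.1
  have he1 : 1 ≤ e := hT₀ ▸ kclass_pos T₀
  have he1R : (1:ℝ) ≤ (e:ℝ) := by exact_mod_cast he1
  have heH : kclass H ≤ e := he.2 ⟨⊤, (kclass_congr Subgroup.topEquiv).symm⟩
  set Φ : ConjClasses (Wreath X H) → ConjClasses H :=
    ConjClasses.map (SemidirectProduct.rightHom) with hΦ
  have hdecomp : kclass (Wreath X H) =
      ∑ c : ConjClasses H, Nat.card {C : ConjClasses (Wreath X H) // Φ C = c} :=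
    card_fiber_sum Φ
  set M := Nat.card (orbitRel.Quotient H (Fin n → ConjClasses X)) with hM
  have hBN := burnside_wreath (X := X) (H := H)
  have hBur : (M : ℝ) * (Nat.card H : ℝ) =
      ∑ h : H, ((k ^ cycleCount ((h : Perm (Fin n))) : ℕ) : ℝ) := by
    exact_mod_cast hBN
  have hcyc1 : cycleCount (((1 : H) : Perm (Fin n))) = n := by
    rw [OneMemClass.coe_one, cycleCount_one]
  have hsum_split : ∑ h : H, ((k ^ cycleCount ((h : Perm (Fin n))) : ℕ) : ℝ) =
      ((k ^ n : ℕ) : ℝ) + ∑ h ∈ Finset.univ.erase (1 : H),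
        ((k ^ cycleCount ((h : Perm (Fin n))) : ℕ) : ℝ) := by
    rw [← Finset.add_sum_erase _ _ (Finset.mem_univ (1 : H)), hcyc1]
  have herase_bound : ∑ h ∈ Finset.univ.erase (1 : H),
      ((k ^ cycleCount ((h : Perm (Fin n))) : ℕ) : ℝ) ≤
      ((Nat.card H : ℝ) - 1) * (k:ℝ) ^ (α * n) := by
    calc ∑ h ∈ Finset.univ.erase (1 : H), ((k ^ cycleCount ((h : Perm (Fin n))) : ℕ) : ℝ)
        ≤ ∑ _h ∈ Finset.univ.erase (1 : H), (k:ℝ) ^ (α * n) :=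
          Finset.sum_le_sum fun h hh => hσ h (Finset.ne_of_mem_erase hh)
      _ = ((Finset.univ.erase (1 : H)).card : ℝ) * (k:ℝ) ^ (α * n) := by
          rw [Finset.sum_const, nsmul_eq_mul]
      _ = ((Nat.card H : ℝ) - 1) * (k:ℝ) ^ (α * n) := by
          rw [Finset.card_erase_of_mem (Finset.mem_univ _), Finset.card_univ]
          have h1 : (1:ℕ) ≤ Fintype.card H := Fintype.card_pos
          rw [Nat.cast_sub h1, Nat.card_eq_fintype_card]
          norm_num
  have hMbound : (M : ℝ) < (k:ℝ) ^ n / (Nat.card H : ℝ) + (k:ℝ) ^ (α * n) := by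
    have hMH : (M:ℝ) = (∑ h : H, ((k ^ cycleCount ((h : Perm (Fin n))) : ℕ) : ℝ)) /
        (Nat.card H : ℝ) := by
      rw [eq_div_iff (ne_of_gt hHR)]
      exact hBur
    rw [hMH, hsum_split, add_div]
    have h1 : ((k ^ n : ℕ) : ℝ) / (Nat.card H : ℝ) = (k:ℝ)^n / (Nat.card H : ℝ) := by
      push_cast; ring
    rw [h1]
    have hfin : (∑ h ∈ Finset.univ.erase (1 : H),
        ((k ^ cycleCount ((h : Perm (Fin n))) : ℕ) : ℝ)) / (Nat.card H : ℝ) <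
        (k:ℝ) ^ (α * n) := by
      rw [div_lt_iff₀ hHR]
      calc (∑ h ∈ Finset.univ.erase (1 : H),
          ((k ^ cycleCount ((h : Perm (Fin n))) : ℕ) : ℝ))
          ≤ ((Nat.card H : ℝ) - 1) * (k:ℝ) ^ (α * n) := herase_bound
        _ < (k:ℝ) ^ (α * n) * (Nat.card H : ℝ) := by nlinarith
    linarith
  have hfib1 : (Nat.card {C : ConjClasses (Wreath X H) // Φ C = 1} : ℝ) ≤ (M:ℝ) := by
    exact_mod_cast fiber_one_le
  have hfibc : ∀ c ∈ Finset.univ.erase (1 : ConjClasses H),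
      (Nat.card {C : ConjClasses (Wreath X H) // Φ C = c} : ℝ) ≤ (k:ℝ) ^ (α * n) := by
    intro c hc
    have hc1 : c ≠ 1 := Finset.ne_of_mem_erase hc
    have hmk : ConjClasses.mk (Quotient.out c) = c := Quotient.out_eq' c
    have hne : (Quotient.out c) ≠ (1:H) := by
      intro h1
      apply hc1
      rw [← hmk, h1, ← ConjClasses.one_eq_mk_one]
    have hle := fiber_le (X := X) (Quotient.out c)
    rw [hmk] at hle
    calc (Nat.card {C : ConjClasses (Wreath X H) // Φ C = c} : ℝ)
        ≤ ((k ^ cycleCount (((Quotient.out c) : H) : Perm (Fin n)) : ℕ) : ℝ) := by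
          exact_mod_cast hle
      _ ≤ (k:ℝ) ^ (α * n) := hσ _ hne
  have hsplit : (kclass (Wreath X H) : ℝ) =
      ∑ c : ConjClasses H, (Nat.card {C : ConjClasses (Wreath X H) // Φ C = c} : ℝ) := by
    rw [hdecomp]
    push_cast
    rfl
  rw [hsplit, ← Finset.add_sum_erase _ _ (Finset.mem_univ (1 : ConjClasses H))]
  have herased : ∑ c ∈ Finset.univ.erase (1 : ConjClasses H),
      (Nat.card {C : ConjClasses (Wreath X H) // Φ C = c} : ℝ) ≤
      ((e:ℝ) - 1) * (k:ℝ) ^ (α * n) := by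
    calc ∑ c ∈ Finset.univ.erase (1 : ConjClasses H),
        (Nat.card {C : ConjClasses (Wreath X H) // Φ C = c} : ℝ)
        ≤ ∑ _c ∈ Finset.univ.erase (1 : ConjClasses H), (k:ℝ) ^ (α * n) :=
          Finset.sum_le_sum hfibc
      _ = ((Finset.univ.erase (1 : ConjClasses H)).card : ℝ) * (k:ℝ) ^ (α * n) := by
          rw [Finset.sum_const, nsmul_eq_mul]
      _ ≤ ((e:ℝ) - 1) * (k:ℝ) ^ (α * n) := by
          apply mul_le_mul_of_nonneg_right _ (le_of_lt hpow_pos)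
          rw [Finset.card_erase_of_mem (Finset.mem_univ _), Finset.card_univ]
          have h1 : (1:ℕ) ≤ Fintype.card (ConjClasses H) := Fintype.card_pos
          have h2 : Fintype.card (ConjClasses H) ≤ e := by
            rw [← Nat.card_eq_fintype_card]
            exact heH
          rw [Nat.cast_sub h1]
          have h3 : (Fintype.card (ConjClasses H) : ℝ) ≤ (e:ℝ) := by exact_mod_cast h2
          push_cast
          linarith
  have hE : ((e:ℝ) - 1) * ((k:ℝ) ^ (α * n)) + (k:ℝ) ^ (α * n) = (e:ℝ) * ((k:ℝ) ^ (α * n)) := by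
    ring
  have hE2 : (e:ℝ) * ((k:ℝ) ^ (α * n)) ≤ 2 * (e:ℝ) * ((k:ℝ) ^ (α * n)) := by
    nlinarith
  linarith
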